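/- Let P be a finite poset, n ≥ 1, and 𝒥 a poset ideal of Hom(P,[n]). Then the Alexander dual of L(𝒥) is L(n,P) + K(𝒥^c) in k[x_{[n]×P}]: a monomial m of k[x_{[n]×P}] has a nontrivial common divisor with m_{(Γφ)^τ} for every φ ∈ 𝒥 if and only if m ∈ L(n,P) + K(𝒥^c), where 𝒥^c = Hom(P,[n]) ∖ 𝒥. -/

import Mathlib

open MvPolynomial

section AlexDualAux

lemma AD_prod_X_eq_monomial {σ : Type*} {k : Type*} [CommSemiring k] {ι : Type*}
    (t : Finset ι) (f : ι → σ) :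
    (∏ i ∈ t, (X (f i) : MvPolynomial σ k)) = monomial (∑ i ∈ t, Finsupp.single (f i) 1) 1 := by
  induction t using Finset.cons_induction with
  | empty => simp
  | cons a t ha ih =>
      rw [Finset.prod_cons, Finset.sum_cons, ih, X, monomial_mul, one_mul]

set_option maxHeartbeats 1000000 in
lemma AD_fin_fixed_point {n : ℕ} [NeZero n] {f : Fin n → Fin n} (hf : Monotone f) :
    ∃ i, f i = i := by
  classical
  have htop : ∀ i : Fin n, i ≤ ⟨n - 1, Nat.sub_lt (NeZero.pos n) one_pos⟩ := by
    intro i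
    have := i.isLt
    rw [Fin.le_def]
    show i.1 ≤ n - 1
    omega
  have hne : (Finset.univ.filter fun i : Fin n => f i ≤ i).Nonempty :=
    ⟨_, Finset.mem_filter.2 ⟨Finset.mem_univ _, htop _⟩⟩
  set i₀ := (Finset.univ.filter fun i : Fin n => f i ≤ i).min' hne with hi₀
  have hmem := Finset.min'_mem _ hne
  rw [Finset.mem_filter] at hmem
  refine ⟨i₀, le_antisymm hmem.2 ?_⟩
  by_contra hlt
  push_neg at hlt
  have hle := Finset.min'_le (Finset.univ.filter fun i : Fin n => f i ≤ i) (f i₀)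
    (Finset.mem_filter.2 ⟨Finset.mem_univ _, hf hmem.2⟩)
  exact absurd hle (not_le.2 hlt)

lemma AD_sum_single_le_iff {ι σ : Type*} (t : Finset ι) (g : ι → σ)
    (hg : Set.InjOn g t) (d : σ →₀ ℕ) :
    (∑ v ∈ t, Finsupp.single (g v) 1) ≤ d ↔ ∀ v ∈ t, g v ∈ d.support := by
  classical
  rw [Finsupp.le_def]
  constructor
  · intro h v hv
    have h1 : (1:ℕ) ≤ ∑ w ∈ t, (Finsupp.single (g w) 1 : σ →₀ ℕ) (g v) := by
      have he : (Finsupp.single (g v) 1 : σ →₀ ℕ) (g v) = 1 := by simp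
      calc (1:ℕ) = (Finsupp.single (g v) 1 : σ →₀ ℕ) (g v) := he.symm
        _ ≤ ∑ w ∈ t, (Finsupp.single (g w) 1 : σ →₀ ℕ) (g v) :=
          Finset.single_le_sum (f := fun w => (Finsupp.single (g w) 1 : σ →₀ ℕ) (g v))
            (fun w _ => Nat.zero_le _) hv
    have h2 := h (g v)
    rw [Finset.sum_apply'] at h2
    have := le_trans h1 h2
    rw [Finsupp.mem_support_iff]
    omega
  · intro h a
    rw [Finset.sum_apply']
    by_cases hv : ∃ v ∈ t, g v = a
    · obtain ⟨v, hvt, hva⟩ := hv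
      subst hva
      have hfil : t.filter (fun w => g w = g v) = {v} := by
        ext w
        simp only [Finset.mem_filter, Finset.mem_singleton]
        constructor
        · rintro ⟨hwt, hwa⟩
          exact hg hwt hvt hwa
        · rintro rfl; exact ⟨hvt, rfl⟩
      have hsum : ∑ w ∈ t, (Finsupp.single (g w) 1 : σ →₀ ℕ) (g v)
          = ∑ w ∈ t.filter (fun w => g w = g v), 1 := by
        rw [Finset.sum_filter]
        refine Finset.sum_congr rfl fun w _ => ?_
        simp [Finsupp.single_apply]
      rw [hsum, hfil]
      simp only [Finset.sum_singleton]
      have := h v hvt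
      rw [Finsupp.mem_support_iff] at this
      omega
    · push_neg at hv
      have hsum : ∑ w ∈ t, (Finsupp.single (g w) 1 : σ →₀ ℕ) a = 0 := by
        refine Finset.sum_eq_zero fun w hw => ?_
        simp [Finsupp.single_apply, hv w hw]
      rw [hsum]
      exact Nat.zero_le _

open Classical in
noncomputable def ADgreedy (n : ℕ) [NeZero n] {P : Type*} [PartialOrder P] [Finite P]
    (S : Set (Fin n × P)) : P → Fin n :=
  (Finite.to_wellFoundedLT (α := P)).wf.fix
    (fun p rec =>
      if h : ∃ i : Fin n, (i, p) ∉ S ∧ ∀ q (hq : q < p), rec q hq ≤ i then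
        (Finset.univ.filter fun i : Fin n =>
          (i, p) ∉ S ∧ ∀ q (hq : q < p), rec q hq ≤ i).min'
          ⟨h.choose, Finset.mem_filter.2 ⟨Finset.mem_univ _, h.choose_spec⟩⟩
      else 0)

open Classical in
lemma ADgreedy_eq {n : ℕ} [NeZero n] {P : Type*} [PartialOrder P] [Finite P]
    (S : Set (Fin n × P)) (p : P) :
    ADgreedy n S p =
      if h : ∃ i : Fin n, (i, p) ∉ S ∧ ∀ q (_ : q < p), ADgreedy n S q ≤ i then
        (Finset.univ.filter fun i : Fin n =>
          (i, p) ∉ S ∧ ∀ q (_ : q < p), ADgreedy n S q ≤ i).min'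
          ⟨h.choose, Finset.mem_filter.2 ⟨Finset.mem_univ _, h.choose_spec⟩⟩
      else 0 := by
  rw [ADgreedy, WellFounded.fix_eq]

open Classical in
lemma ADgreedy_spec {n : ℕ} [NeZero n] {P : Type*} [PartialOrder P] [Finite P]
    {S : Set (Fin n × P)} {p : P}
    (h : ∃ i : Fin n, (i, p) ∉ S ∧ ∀ q (_ : q < p), ADgreedy n S q ≤ i) :
    ((ADgreedy n S p, p) ∉ S ∧ ∀ q (_ : q < p), ADgreedy n S q ≤ ADgreedy n S p) ∧
      ∀ i : Fin n, ((i, p) ∉ S ∧ ∀ q (_ : q < p), ADgreedy n S q ≤ i) → ADgreedy n S p ≤ i := by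
  rw [ADgreedy_eq S p, dif_pos h]
  constructor
  · have := Finset.min'_mem (Finset.univ.filter fun i : Fin n =>
        (i, p) ∉ S ∧ ∀ q (_ : q < p), ADgreedy n S q ≤ i)
      ⟨h.choose, Finset.mem_filter.2 ⟨Finset.mem_univ _, h.choose_spec⟩⟩
    exact (Finset.mem_filter.1 this).2
  · intro i hi
    exact Finset.min'_le _ i (Finset.mem_filter.2 ⟨Finset.mem_univ i, hi⟩)

lemma ADgreedy_good {n : ℕ} [NeZero n] {P : Type*} [PartialOrder P] [Finite P]
    {S : Set (Fin n × P)}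
    (hS : ¬ ∃ c : Fin n → P, Monotone c ∧ ∀ i, (i, c i) ∈ S) (p : P) :
    ((ADgreedy n S p, p) ∉ S ∧ ∀ q (_ : q < p), ADgreedy n S q ≤ ADgreedy n S p) ∧
      (∀ i : Fin n, ((i, p) ∉ S ∧ ∀ q (_ : q < p), ADgreedy n S q ≤ i) → ADgreedy n S p ≤ i) ∧
      ∃ c : Fin n → P, Monotone c ∧
        ∀ i : Fin n, i < ADgreedy n S p → ((i, c i) ∈ S ∧ c i ≤ p) := by
  classical
  refine WellFounded.induction (C := fun p : P =>
      ((ADgreedy n S p, p) ∉ S ∧ ∀ q (_ : q < p), ADgreedy n S q ≤ ADgreedy n S p) ∧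
      (∀ i : Fin n, ((i, p) ∉ S ∧ ∀ q (_ : q < p), ADgreedy n S q ≤ i) → ADgreedy n S p ≤ i) ∧
      ∃ c : Fin n → P, Monotone c ∧
        ∀ i : Fin n, i < ADgreedy n S p → ((i, c i) ∈ S ∧ c i ≤ p))
    (Finite.to_wellFoundedLT (α := P)).wf p ?_
  intro p IH
  obtain ⟨M, c₀, hc₀mono, hMub, hc₀⟩ :
      ∃ (M : Fin n) (c₀ : Fin n → P), Monotone c₀ ∧ (∀ q, q < p → ADgreedy n S q ≤ M) ∧
        (∀ i : Fin n, i < M → ((i, c₀ i) ∈ S ∧ c₀ i < p)) := by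
    by_cases hq : ∃ q, q < p
    · obtain ⟨q₁, hq₁⟩ := hq
      obtain ⟨q₀, hq₀mem, hq₀max⟩ := Set.Finite.exists_maximalFor
        (fun q => ADgreedy n S q) {q | q < p} (Set.toFinite _) ⟨q₁, hq₁⟩
      obtain ⟨-, -, c', hc'mono, hc'⟩ := IH q₀ hq₀mem
      refine ⟨ADgreedy n S q₀, c', hc'mono, ?_, ?_⟩
      · intro q hqp
        rcases le_total (ADgreedy n S q) (ADgreedy n S q₀) with hle | hle
        · exact hle
        · exact hq₀max hqp hle
      · intro i hi
        exact ⟨(hc' i hi).1, lt_of_le_of_lt (hc' i hi).2 hq₀mem⟩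
    · push_neg at hq
      refine ⟨0, fun _ => p, monotone_const, fun q hqp => absurd hqp (hq q), ?_⟩
      intro i hi
      have : (0 : Fin n).1 = 0 := rfl
      rw [Fin.lt_def] at hi
      omega
  have hglue : Monotone (fun i => if i < M then c₀ i else p) := by
    intro i j hij
    by_cases hi : i < M
    · by_cases hj : j < M
      · simpa [hi, hj] using hc₀mono hij
      · simp only [if_pos hi, if_neg hj]
        exact (hc₀ i hi).2.le
    · have hj : ¬ j < M := fun hj => hi (lt_of_le_of_lt hij hj)
      simp [hi, hj]
  have h : ∃ i : Fin n, (i, p) ∉ S ∧ ∀ q (_ : q < p), ADgreedy n S q ≤ i := by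
    by_contra hcon
    push_neg at hcon
    apply hS
    refine ⟨fun i => if i < M then c₀ i else p, hglue, ?_⟩
    intro i
    by_cases hi : i < M
    · simpa [hi] using (hc₀ i hi).1
    · simp only [if_neg hi]
      by_contra hiS
      obtain ⟨q, hqp, hgt⟩ := hcon i hiS
      exact absurd (le_trans (hMub q hqp) (not_lt.1 hi)) (not_le.2 hgt)
  obtain ⟨⟨hnotS, hmono⟩, hmin⟩ := ADgreedy_spec h
  refine ⟨⟨hnotS, hmono⟩, hmin, fun i => if i < M then c₀ i else p, hglue, ?_⟩
  intro i hi
  by_cases hiM : i < M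
  · exact ⟨by simpa [hiM] using (hc₀ i hiM).1, by simp [hiM, (hc₀ i hiM).2.le]⟩
  · simp only [if_neg hiM]
    refine ⟨?_, le_refl p⟩
    by_contra hiS
    exact absurd (hmin i ⟨hiS, fun q hq => le_trans (hMub q hq) (not_lt.1 hiM)⟩)
      (not_le.2 hi)

end AlexDualAux

/-- For a poset ideal `𝒥` of `Hom(P,[n])`, the Alexander dual of `L(𝒥)` is
`L(n,P) + K(𝒥^c)`: a monomial of `k[x_{[n]×P}]` has a nontrivial common divisor with
`m_{(Γφ)^τ}` for every `φ ∈ 𝒥` iff it lies in `L(n,P) + K(𝒥^c)`. -/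
theorem alexander_dual_of_coletterplace_poset_ideal
    (k : Type*) [Field k]
    {P : Type*} [PartialOrder P] [Fintype P]
    (n : ℕ) (hn : 1 ≤ n)
    (𝒥 : Set (P → Fin n))
    (h𝒥mono : ∀ φ ∈ 𝒥, Monotone φ)
    (h𝒥down : ∀ φ ∈ 𝒥, ∀ ψ : P → Fin n, Monotone ψ → (∀ p, ψ p ≤ φ p) → ψ ∈ 𝒥)
    (LnP : Ideal (MvPolynomial (Fin n × P) k))
    (hLnP : LnP = Ideal.span
      { m | ∃ c : Fin n → P, Monotone c ∧ m = ∏ i : Fin n, X (i, c i) })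
    (K𝒥c : Ideal (MvPolynomial (Fin n × P) k))
    (hK : K𝒥c = Ideal.span
      ((fun φ : P → Fin n => ∏ᶠ (v : P × Fin n)
          (_ : v.2 < φ v.1 ∧ ∀ q : P, q < v.1 → φ q ≤ v.2),
            (X (v.2, v.1) : MvPolynomial (Fin n × P) k)) ''
        {φ : P → Fin n | Monotone φ ∧ φ ∉ 𝒥}))
    (d : Fin n × P →₀ ℕ) :
    (∀ φ ∈ 𝒥, ∃ p : P, (φ p, p) ∈ d.support) ↔
      monomial d (1 : k) ∈ LnP + K𝒥c := by
  classical
  haveI : NeZero n := ⟨by omega⟩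
  subst hLnP hK
  -- rewrite the two generating sets as images of monomials
  have hG1 : {m : MvPolynomial (Fin n × P) k |
        ∃ c : Fin n → P, Monotone c ∧ m = ∏ i : Fin n, X (i, c i)}
      = (fun e => monomial e (1:k)) ''
        {e : (Fin n × P) →₀ ℕ | ∃ c : Fin n → P, Monotone c ∧
          e = ∑ i : Fin n, Finsupp.single ((i, c i) : Fin n × P) 1} := by
    ext m
    simp only [Set.mem_setOf_eq, Set.mem_image]
    constructor
    · rintro ⟨c, hc, rfl⟩
      exact ⟨_, ⟨c, hc, rfl⟩,
        (AD_prod_X_eq_monomial Finset.univ fun i : Fin n => ((i, c i) : Fin n × P)).symm⟩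
    · rintro ⟨e, ⟨c, hc, rfl⟩, rfl⟩
      exact ⟨c, hc,
        (AD_prod_X_eq_monomial Finset.univ fun i : Fin n => ((i, c i) : Fin n × P)).symm⟩
  have hfin : ∀ φ : P → Fin n,
      (∏ᶠ (v : P × Fin n) (_ : v.2 < φ v.1 ∧ ∀ q : P, q < v.1 → φ q ≤ v.2),
        (X (v.2, v.1) : MvPolynomial (Fin n × P) k))
      = monomial (∑ v ∈ Finset.univ.filter
          (fun v : P × Fin n => v.2 < φ v.1 ∧ ∀ q : P, q < v.1 → φ q ≤ v.2),
          Finsupp.single ((v.2, v.1) : Fin n × P) 1) 1 := by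
    intro φ
    have h1 : (∏ᶠ (v : P × Fin n) (_ : v.2 < φ v.1 ∧ ∀ q : P, q < v.1 → φ q ≤ v.2),
          (X (v.2, v.1) : MvPolynomial (Fin n × P) k))
        = ∏ v ∈ Finset.univ.filter
            (fun v : P × Fin n => v.2 < φ v.1 ∧ ∀ q : P, q < v.1 → φ q ≤ v.2),
            (X (v.2, v.1) : MvPolynomial (Fin n × P) k) := by
      refine finprod_cond_eq_prod_of_cond_iff _ ?_
      intro v _
      simp
    rw [h1, AD_prod_X_eq_monomial]
  have hG2 : ((fun φ : P → Fin n => ∏ᶠ (v : P × Fin n)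
          (_ : v.2 < φ v.1 ∧ ∀ q : P, q < v.1 → φ q ≤ v.2),
            (X (v.2, v.1) : MvPolynomial (Fin n × P) k)) ''
        {φ : P → Fin n | Monotone φ ∧ φ ∉ 𝒥})
      = (fun e => monomial e (1:k)) ''
        {e : (Fin n × P) →₀ ℕ | ∃ φ : P → Fin n, (Monotone φ ∧ φ ∉ 𝒥) ∧
          e = ∑ v ∈ Finset.univ.filter
            (fun v : P × Fin n => v.2 < φ v.1 ∧ ∀ q : P, q < v.1 → φ q ≤ v.2),
            Finsupp.single ((v.2, v.1) : Fin n × P) 1} := by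
    ext m
    simp only [Set.mem_image, Set.mem_setOf_eq]
    constructor
    · rintro ⟨φ, hφ, rfl⟩
      exact ⟨_, ⟨φ, hφ, rfl⟩, (hfin φ).symm⟩
    · rintro ⟨e, ⟨φ, hφ, rfl⟩, rfl⟩
      exact ⟨φ, hφ, hfin φ⟩
  rw [hG1, hG2, Submodule.add_eq_sup, ← Ideal.span_union, ← Set.image_union,
    mem_ideal_span_monomial_image]
  rw [support_monomial, if_neg (one_ne_zero (α := k))]
  simp only [Finset.mem_singleton, forall_eq, Set.mem_union, Set.mem_setOf_eq]
  -- now the goal is purely combinatorial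
  constructor
  · -- forward direction: use the greedy map
    intro hJ
    by_contra hno
    have hA : ¬ ∃ c : Fin n → P, Monotone c ∧ ∀ i : Fin n, (i, c i) ∈ d.support := by
      rintro ⟨c, hc, hch⟩
      exact hno ⟨_, Or.inl ⟨c, hc, rfl⟩,
        (AD_sum_single_le_iff Finset.univ (fun i : Fin n => ((i, c i) : Fin n × P))
          (fun a _ b _ h => congrArg Prod.fst h) d).2 (fun i _ => hch i)⟩
    have hB : ¬ ∃ φ : P → Fin n, Monotone φ ∧ φ ∉ 𝒥 ∧
        ∀ (p : P) (i : Fin n), i < φ p → (∀ q : P, q < p → φ q ≤ i) →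
          (i, p) ∈ d.support := by
      rintro ⟨φ, hφm, hφn, hΛ⟩
      refine hno ⟨_, Or.inr ⟨φ, ⟨hφm, hφn⟩, rfl⟩,
        (AD_sum_single_le_iff _ (fun v : P × Fin n => ((v.2, v.1) : Fin n × P))
          (fun a _ b _ h => ?_) d).2 ?_⟩
      · have h1 := congrArg Prod.fst h
        have h2 := congrArg Prod.snd h
        simp only at h1 h2
        exact Prod.ext h2 h1
      · intro v hv
        rw [Finset.mem_filter] at hv
        exact hΛ v.1 v.2 hv.2.1 hv.2.2
    set S : Set (Fin n × P) := {v : Fin n × P | v ∈ d.support} with hSdef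
    have hS : ¬ ∃ c : Fin n → P, Monotone c ∧ ∀ i : Fin n, (i, c i) ∈ S := hA
    have good := ADgreedy_good hS
    set φg : P → Fin n := ADgreedy n S with hφg
    have hφmono : Monotone φg := by
      intro a b hab
      rcases hab.lt_or_eq with h | h
      · exact (good b).1.2 a h
      · rw [h]
    have hφnot : ∀ p, (φg p, p) ∉ d.support := fun p => (good p).1.1
    have hφJ : φg ∈ 𝒥 := by
      by_contra hnot
      have hΛ : ¬ ∀ (p : P) (i : Fin n), i < φg p → (∀ q : P, q < p → φg q ≤ i) →
          (i, p) ∈ d.support := fun hall => hB ⟨φg, hφmono, hnot, hall⟩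
      push_neg at hΛ
      obtain ⟨p, i, hi1, hi2, hi3⟩ := hΛ
      exact absurd ((good p).2.1 i ⟨hi3, fun q hq => hi2 q hq⟩) (not_le.2 hi1)
    obtain ⟨p, hp⟩ := hJ φg hφJ
    exact hφnot p hp
  · -- backward direction
    rintro ⟨si, hsi | hsi, hle⟩ φ hφ
    · obtain ⟨c, hc, rfl⟩ := hsi
      have hch : ∀ i : Fin n, (i, c i) ∈ d.support := by
        intro i
        exact (AD_sum_single_le_iff Finset.univ (fun i : Fin n => ((i, c i) : Fin n × P))
          (fun a _ b _ h => congrArg Prod.fst h) d).1 hle i (Finset.mem_univ i)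
      obtain ⟨i₀, hi₀⟩ := AD_fin_fixed_point ((h𝒥mono φ hφ).comp hc)
      refine ⟨c i₀, ?_⟩
      have : φ (c i₀) = i₀ := hi₀
      rw [this]
      exact hch i₀
    · obtain ⟨ψ, ⟨hψmono, hψnot⟩, rfl⟩ := hsi
      have hΛ : ∀ v : P × Fin n,
          (v.2 < ψ v.1 ∧ ∀ q : P, q < v.1 → ψ q ≤ v.2) → (v.2, v.1) ∈ d.support := by
        intro v hv
        refine (AD_sum_single_le_iff _ (fun v : P × Fin n => ((v.2, v.1) : Fin n × P))
          (fun a _ b _ h => ?_) d).1 hle v (Finset.mem_filter.2 ⟨Finset.mem_univ _, hv⟩)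
        · have h1 := congrArg Prod.fst h
          have h2 := congrArg Prod.snd h
          simp only at h1 h2
          exact Prod.ext h2 h1
      have hex : ∃ p, φ p < ψ p := by
        by_contra hc'
        push_neg at hc'
        exact hψnot (h𝒥down φ hφ ψ hψmono hc')
      obtain ⟨p₀, hp₀, hminT⟩ := Set.Finite.exists_minimalFor id {p : P | φ p < ψ p}
        (Set.toFinite _) hex
      refine ⟨p₀, hΛ (p₀, φ p₀) ⟨hp₀, ?_⟩⟩
      intro q hq
      have hqT : ¬ φ q < ψ q := by
        intro hqmem
        have := hminT hqmem hq.le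
        simp only [id] at this
        exact absurd (lt_of_lt_of_le hq this) (lt_irrefl _)
      exact le_trans (not_lt.1 hqT) (h𝒥mono φ hφ hq.le)
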